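/- The function L(z) := −(1/2)·Log(z)·Log(1/(1−z)) − ∫₀¹ Log(1−tz)/t dt − π²/6 is holomorphic (complex differentiable) on the open set Ω := ℂ \ {z ∈ ℂ | Im z = 0 and (Re z ≤ 0 or Re z ≥ 1)}, i.e. on the complex plane with the real intervals (−∞,0] and [1,∞) removed. -/

import Mathlib

open Complex MeasureTheory Metric Set intervalIntegral

lemma aux_inv_mem_slitPlane {w : ℂ} (h : w ∈ Complex.slitPlane) :
    w⁻¹ ∈ Complex.slitPlane := by
  have hw : w ≠ 0 := Complex.slitPlane_ne_zero h
  have hns : 0 < Complex.normSq w := Complex.normSq_pos.mpr hw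
  rw [Complex.mem_slitPlane_iff] at h ⊢
  rw [Complex.inv_re, Complex.inv_im]
  rcases h with h | h
  · exact Or.inl (div_pos h hns)
  · exact Or.inr (by simpa using div_ne_zero (neg_ne_zero.mpr h) hns.ne')

lemma aux_slit {z : ℂ} (hz : ¬(z.im = 0 ∧ (z.re ≤ 0 ∨ 1 ≤ z.re)))
    {t : ℝ} (ht0 : 0 ≤ t) (ht1 : t ≤ 1) :
    (1 - (t : ℂ) * z) ∈ Complex.slitPlane := by
  push_neg at hz
  rw [Complex.mem_slitPlane_iff]
  simp only [Complex.sub_re, Complex.sub_im, Complex.one_re, Complex.one_im,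
    Complex.mul_re, Complex.mul_im, Complex.ofReal_re, Complex.ofReal_im]
  by_cases him : z.im = 0
  · obtain ⟨h0, h1⟩ := hz him
    left
    nlinarith
  · rcases eq_or_lt_of_le ht0 with h | h
    · left; simp [← h]
    · right; simp [him, h.ne']

set_option maxHeartbeats 1600000 in
/-- Rogers' dilogarithm `L(z) = −(1/2)Log(z)Log(1/(1−z)) + Li₂(z) − π²/6` is holomorphic
on the complex plane with the real rays `(−∞,0]` and `[1,∞)` removed. -/
theorem stmt12 :
    DifferentiableOn ℂ
      (fun z : ℂ =>
        -(1/2 : ℂ) * Complex.log z * Complex.log (1 / (1 - z))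
          - (∫ t in (0:ℝ)..1, Complex.log (1 - (t : ℂ) * z) / (t : ℂ))
          - (Real.pi : ℂ) ^ 2 / 6)
      {z : ℂ | z.im = 0 ∧ (z.re ≤ 0 ∨ 1 ≤ z.re)}ᶜ := by
  have hopen : IsOpen ({z : ℂ | z.im = 0 ∧ (z.re ≤ 0 ∨ 1 ≤ z.re)}ᶜ) := by
    rw [isOpen_compl_iff]
    simp only [Set.setOf_and, Set.setOf_or]
    exact (isClosed_eq Complex.continuous_im continuous_const).inter
      ((isClosed_le Complex.continuous_re continuous_const).union
        (isClosed_le continuous_const Complex.continuous_re))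
  intro z₀ hz₀
  apply DifferentiableAt.differentiableWithinAt
  have hz₀' : ¬(z₀.im = 0 ∧ (z₀.re ≤ 0 ∨ 1 ≤ z₀.re)) := hz₀
  -- first factor memberships
  have h1 : z₀ ∈ Complex.slitPlane := by
    rw [Complex.mem_slitPlane_iff]
    have hz₀' := hz₀'
    push_neg at hz₀'
    by_cases him : z₀.im = 0
    · left; exact (hz₀' him).1
    · right; exact him
  have h2 : (1 - z₀) ∈ Complex.slitPlane := by
    simpa using aux_slit hz₀' zero_le_one le_rfl
  have h2' : (1 - z₀) ≠ 0 := Complex.slitPlane_ne_zero h2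
  have h3 : (1 / (1 - z₀)) ∈ Complex.slitPlane := by
    rw [one_div]; exact aux_inv_mem_slitPlane h2
  have D1 : DifferentiableAt ℂ
      (fun z : ℂ => -(1/2 : ℂ) * Complex.log z * Complex.log (1 / (1 - z))) z₀ := by
    have dinv : DifferentiableAt ℂ (fun z : ℂ => 1 / (1 - z)) z₀ :=
      (differentiableAt_const 1).div ((differentiableAt_const 1).sub differentiableAt_id) h2'
    exact (((differentiableAt_const _).mul (Complex.differentiableAt_log h1)).mul
      ((Complex.differentiableAt_log h3).comp (g := Complex.log) z₀ dinv))
  -- the integral term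
  obtain ⟨ε, hε, hball⟩ : ∃ ε > 0,
      closedBall z₀ ε ⊆ {z : ℂ | z.im = 0 ∧ (z.re ≤ 0 ∨ 1 ≤ z.re)}ᶜ :=
    (Metric.nhds_basis_closedBall.mem_iff).mp (hopen.mem_nhds hz₀)
  have hslit : ∀ t ∈ Set.Icc (0:ℝ) 1, ∀ x ∈ closedBall z₀ ε,
      (1 - (t : ℂ) * x) ∈ Complex.slitPlane := fun t ht x hx =>
    aux_slit (hball hx) ht.1 ht.2
  have hclog : ∀ x ∈ closedBall z₀ ε, ∀ t ∈ Set.Icc (0:ℝ) 1,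
      ContinuousAt (fun r : ℝ => Complex.log (1 - (r : ℂ) * x)) t := by
    intro x hx t ht
    have hc : Continuous (fun r : ℝ => 1 - (r : ℂ) * x) :=
      continuous_const.sub (Complex.continuous_ofReal.mul continuous_const)
    exact ContinuousAt.comp (f := fun r : ℝ => 1 - (r : ℂ) * x) (x := t)
      (continuousAt_clog (hslit t ht x hx)) hc.continuousAt
  -- compactness: a uniform lower bound on ‖1 - t x‖
  have hScomp : IsCompact ((Set.Icc (0:ℝ) 1) ×ˢ closedBall z₀ ε) :=
    isCompact_Icc.prod (isCompact_closedBall _ _)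
  have hSne : ((Set.Icc (0:ℝ) 1) ×ˢ closedBall z₀ ε).Nonempty :=
    ⟨(0, z₀), ⟨⟨le_rfl, zero_le_one⟩, mem_closedBall_self hε.le⟩⟩
  have hcont : ContinuousOn (fun p : ℝ × ℂ => ‖1 - (p.1 : ℂ) * p.2‖)
      ((Set.Icc (0:ℝ) 1) ×ˢ closedBall z₀ ε) := by fun_prop
  obtain ⟨p, hpS, hpmin⟩ := hScomp.exists_isMinOn hSne hcont
  set δ : ℝ := ‖1 - (p.1 : ℂ) * p.2‖ with hδdef
  have hδ : 0 < δ := by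
    have := hslit p.1 hpS.1 p.2 hpS.2
    simpa [hδdef, norm_pos_iff] using Complex.slitPlane_ne_zero this
  have hlow : ∀ t ∈ Set.Icc (0:ℝ) 1, ∀ x ∈ closedBall z₀ ε, δ ≤ ‖1 - (t : ℂ) * x‖ :=
    fun t ht x hx => isMinOn_iff.mp hpmin (t, x) (Set.mk_mem_prod ht hx)
  -- apply the dominated parametric derivative theorem
  have key := intervalIntegral.hasDerivAt_integral_of_dominated_loc_of_deriv_le
    (F := fun x t => Complex.log (1 - (t : ℂ) * x) / (t : ℂ))
    (F' := fun x t => -(1 - (t : ℂ) * x)⁻¹)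
    (x₀ := z₀) (a := 0) (b := 1) (μ := volume) (bound := fun _ => δ⁻¹) (Metric.ball_mem_nhds z₀ hε)
    ?_ ?_ ?_ ?_ ?_ ?_
  · have D2 : DifferentiableAt ℂ
        (fun z : ℂ => ∫ t in (0:ℝ)..1, Complex.log (1 - (t : ℂ) * z) / (t : ℂ)) z₀ :=
      key.2.differentiableAt
    exact (D1.sub D2).sub (differentiableAt_const _)
  · -- measurability of F x near z₀
    filter_upwards [Metric.closedBall_mem_nhds z₀ hε] with x hx
    rw [Set.uIoc_of_le (zero_le_one)]
    apply ContinuousOn.aestronglyMeasurable _ measurableSet_Ioc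
    intro t ht
    apply ContinuousWithinAt.div
    · exact (hclog x hx t ⟨ht.1.le, ht.2⟩).continuousWithinAt
    · exact Complex.continuous_ofReal.continuousWithinAt
    · exact_mod_cast ht.1.ne'
  · -- integrability of F z₀
    rw [intervalIntegrable_iff, Set.uIoc_of_le (zero_le_one)]
    -- bound on the compact interval
    obtain ⟨s, hsI, hsmax⟩ := isCompact_Icc.exists_isMaxOn
      (Set.nonempty_Icc.mpr zero_le_one)
      (f := fun t : ℝ => ‖Complex.log (1 - (t : ℂ) * z₀)‖)
      (by
        intro t ht
        exact (hclog z₀ (mem_closedBall_self hε.le) t ht).continuousWithinAt.norm)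
    set C : ℝ := ‖Complex.log (1 - (s : ℂ) * z₀)‖ with hCdef
    set t₁ : ℝ := min 1 (1 / (2 * (‖z₀‖ + 1))) with ht₁def
    have hz₀pos : (0:ℝ) < ‖z₀‖ + 1 := by positivity
    have ht₁pos : 0 < t₁ := lt_min one_pos (by positivity)
    have hconst : IntegrableOn (fun _ : ℝ => max ((3/2) * ‖z₀‖) (C / t₁))
        (Set.Ioc (0:ℝ) 1) volume :=
      MeasureTheory.integrableOn_const measure_Ioc_lt_top.ne
    apply hconst.mono'
    · apply ContinuousOn.aestronglyMeasurable _ measurableSet_Ioc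
      intro t ht
      apply ContinuousWithinAt.div
      · exact (hclog z₀ (mem_closedBall_self hε.le) t
          ⟨ht.1.le, ht.2⟩).continuousWithinAt
      · exact Complex.continuous_ofReal.continuousWithinAt
      · exact_mod_cast ht.1.ne'
    · rw [MeasureTheory.ae_restrict_iff' measurableSet_Ioc]
      filter_upwards with t ht
      have htpos : 0 < t := ht.1
      have hnorm : ‖Complex.log (1 - (t : ℂ) * z₀) / (t : ℂ)‖
          = ‖Complex.log (1 - (t : ℂ) * z₀)‖ / t := by
        rw [norm_div, Complex.norm_real, Real.norm_of_nonneg htpos.le]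
      rw [hnorm]
      rcases le_or_gt t t₁ with hle | hgt
      · refine le_trans ?_ (le_max_left _ _)
        rw [div_le_iff₀ htpos]
        have hs : ‖-((t : ℂ) * z₀)‖ ≤ 1/2 := by
          rw [norm_neg, norm_mul, Complex.norm_real, Real.norm_of_nonneg htpos.le]
          have h2 : t ≤ 1 / (2 * (‖z₀‖ + 1)) := le_trans hle (min_le_right _ _)
          have h3 : t * (2 * (‖z₀‖ + 1)) ≤ 1 := by
            rw [← le_div_iff₀ (by positivity)] ; exact h2
          nlinarith [norm_nonneg z₀]
        have := Complex.norm_log_one_add_half_le_self hs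
        rw [← sub_eq_add_neg] at this
        calc ‖Complex.log (1 - (t : ℂ) * z₀)‖ ≤ 3/2 * ‖-((t : ℂ) * z₀)‖ := this
          _ = 3/2 * (t * ‖z₀‖) := by
              rw [norm_neg, norm_mul, Complex.norm_real, Real.norm_of_nonneg htpos.le]
          _ = 3/2 * ‖z₀‖ * t := by ring
      · refine le_trans ?_ (le_max_right _ _)
        have hC : ‖Complex.log (1 - (t : ℂ) * z₀)‖ ≤ C :=
          hsmax ⟨htpos.le, ht.2⟩
        exact div_le_div₀ (le_trans (norm_nonneg _) hC) hC ht₁pos hgt.le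
  · -- measurability of F' z₀
    rw [Set.uIoc_of_le (zero_le_one)]
    apply ContinuousOn.aestronglyMeasurable _ measurableSet_Ioc
    intro t ht
    apply ContinuousWithinAt.neg
    apply ContinuousWithinAt.inv₀
    · exact (continuous_const.sub (Complex.continuous_ofReal.mul
        continuous_const)).continuousWithinAt
    · exact Complex.slitPlane_ne_zero
        (hslit t ⟨ht.1.le, ht.2⟩ z₀ (mem_closedBall_self hε.le))
  · -- bound for F'
    filter_upwards with t ht x hx
    rw [Set.uIoc_of_le (zero_le_one)] at ht
    have hxcb : x ∈ closedBall z₀ ε := ball_subset_closedBall hx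
    rw [norm_neg, norm_inv]
    exact inv_anti₀ hδ (hlow t ⟨ht.1.le, ht.2⟩ x hxcb)
  · exact intervalIntegrable_const
  · -- differentiability in x with derivative F'
    filter_upwards with t ht x hx
    rw [Set.uIoc_of_le (zero_le_one)] at ht
    have htne : (t : ℂ) ≠ 0 := by exact_mod_cast ht.1.ne'
    have hxcb : x ∈ closedBall z₀ ε := ball_subset_closedBall hx
    have hmem := hslit t ⟨ht.1.le, ht.2⟩ x hxcb
    have hinner : HasDerivAt (fun y : ℂ => 1 - (t : ℂ) * y) (-(t : ℂ)) x := by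
      simpa using ((hasDerivAt_id x).const_mul (t : ℂ)).const_sub 1
    have hlog := (Complex.hasDerivAt_log hmem).comp x hinner
    have := hlog.div_const (t : ℂ)
    have hne : (1 - (t : ℂ) * x) ≠ 0 := Complex.slitPlane_ne_zero hmem
    convert this using 1 <;> try rfl
    rw [mul_div_assoc, neg_div, div_self htne, mul_neg, mul_one]
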